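/- (Half-integrality of basic feasible solutions of the fractional edge cover polytope; Lemma 6.4, first part) Let G = (V,E) be a finite simple graph with no isolated vertices, and let P = { x ∈ ℝ^E : x_e ≥ 0 for all e ∈ E, and ∑_{e∈E : v∈e} x_e ≥ 1 for all v ∈ V } be its fractional edge cover polyhedron. Then every extreme point x of P satisfies x_e ∈ {0, 1/2, 1} for every e ∈ E. -/

import Mathlib

open Finset

private lemma halfint_aux {ι V : Type*} [Fintype ι] [Fintype V] [DecidableEq ι]
    (mem : ι → V → Prop) [∀ i v, Decidable (mem i v)]
    (x : ι → ℝ) (hx0 : ∀ i, 0 ≤ x i)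
    (hcard2 : ∀ i, (univ.filter (fun v => mem i v)).card = 2)
    (hK : ∀ d : ι → ℝ, (∀ i, d i ≠ 0 → 0 < x i) →
      (∀ v, (∑ i ∈ univ.filter (fun i => mem i v), x i) = 1 →
        (∑ i ∈ univ.filter (fun i => mem i v), d i) = 0) → d = 0) :
    ∀ i, x i = 0 ∨ x i = 1 / 2 ∨ x i = 1 := by
  classical
  set F : V → Finset ι := fun v => univ.filter (fun i => mem i v) with hF
  have hFmem : ∀ (i : ι) (v : V), i ∈ F v ↔ mem i v := by
    intro i v; simp [hF]
  -- Step 1 : all values are at most 1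
  have hle1 : ∀ i, x i ≤ 1 := by
    intro i0
    by_contra hgt
    push_neg at hgt
    have hd := hK (fun j => if j = i0 then 1 else 0) ?_ ?_
    · have := congrFun hd i0
      simp at this
    · intro j hj
      have hji : j = i0 := by by_contra h; simp [h] at hj
      subst hji; linarith
    · intro v hSv
      have hnm : ¬ mem i0 v := by
        intro hm
        have h1 : x i0 ≤ ∑ i ∈ F v, x i :=
          single_le_sum (fun k _ => hx0 k) ((hFmem i0 v).2 hm)
        rw [hSv] at h1; linarith
      apply sum_eq_zero
      intro j hjF
      have hjm : mem j v := (hFmem j v).1 hjF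
      have hne : j ≠ i0 := fun h => hnm (h ▸ hjm)
      simp [hne]
  -- the fractional edges
  set A : Finset ι := univ.filter (fun i => 0 < x i ∧ x i < 1) with hA
  have hAmem : ∀ i : ι, i ∈ A ↔ (0 < x i ∧ x i < 1) := by
    intro i; simp [hA]
  -- F1 : a tight vertex incident to a fractional edge has another fractional edge
  have hF1 : ∀ v, (∑ i ∈ F v, x i) = 1 → ∀ i ∈ A, mem i v →
      ∃ j ∈ A, j ≠ i ∧ mem j v := by
    intro v hSv i hiA him
    have hiF : i ∈ F v := (hFmem i v).2 him
    have hxi := (hAmem i).1 hiA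
    have hadd := Finset.add_sum_erase (F v) x hiF
    have herase : ∑ j ∈ (F v).erase i, x j = 1 - x i := by
      rw [hSv] at hadd; linarith
    obtain ⟨j, hjF, hjne0⟩ := Finset.exists_ne_zero_of_sum_ne_zero
      (by rw [herase]; exact ne_of_gt (by linarith [hxi.2]))
    have hjne : j ≠ i := (mem_erase.1 hjF).1
    have hjmem : mem j v := (hFmem j v).1 (mem_erase.1 hjF).2
    have hxjpos : 0 < x j := (hx0 j).lt_of_ne (Ne.symm hjne0)
    have hxjle : x j ≤ 1 - x i := by
      have := single_le_sum (f := x) (fun k _ => hx0 k) hjF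
      rw [herase] at this; exact this
    exact ⟨j, (hAmem j).2 ⟨hxjpos, by linarith [hxi.1]⟩, hjne, hjmem⟩
  -- tight vertices meeting A
  set T : Finset V := univ.filter (fun v => (∑ i ∈ F v, x i) = 1 ∧ ∃ i ∈ A, mem i v)
    with hT
  have hTmem : ∀ v, v ∈ T ↔ ((∑ i ∈ F v, x i) = 1 ∧ ∃ i ∈ A, mem i v) := by
    intro v; simp [hT]
  -- each vertex of T has at least two incident A-edges
  have hlb : ∀ v ∈ T, 2 ≤ (A.filter (fun i => mem i v)).card := by
    intro v hv
    obtain ⟨hSv, i, hiA, him⟩ := (hTmem v).1 hv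
    obtain ⟨j, hjA, hji, hjm⟩ := hF1 v hSv i hiA him
    exact one_lt_card.2 ⟨i, mem_filter.2 ⟨hiA, him⟩, j, mem_filter.2 ⟨hjA, hjm⟩,
      fun h => hji h.symm⟩
  -- |A| ≤ |T| by linear independence
  have hcardAT : A.card ≤ T.card := by
    have hli : LinearIndependent ℝ
        (fun i : ↥A => fun v : ↥T => (if mem (i : ι) (v : V) then (1:ℝ) else 0)) := by
      rw [Fintype.linearIndependent_iff]
      intro c hc i
      set d : ι → ℝ := fun j => if h : j ∈ A then c ⟨j, h⟩ else 0 with hd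
      have hd1 : ∀ j, d j ≠ 0 → 0 < x j := by
        intro j hj
        by_cases h : j ∈ A
        · exact ((hAmem j).1 h).1
        · simp [hd, h] at hj
      have hd2 : ∀ v, (∑ i ∈ F v, x i) = 1 → (∑ i ∈ F v, d i) = 0 := by
        intro v hSv
        by_cases hvT : v ∈ T
        · have h0 := congrFun hc ⟨v, hvT⟩
          simp only [Finset.sum_apply, Pi.smul_apply, smul_eq_mul, Pi.zero_apply] at h0
          calc ∑ i ∈ F v, d i
              = ∑ i ∈ univ, if mem i v then d i else 0 := by
                rw [hF]; exact Finset.sum_filter _ _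
            _ = ∑ i ∈ A, if mem i v then d i else 0 := by
                refine (Finset.sum_subset (subset_univ A) ?_).symm
                intro j _ hjA
                have : d j = 0 := by simp [hd, hjA]
                simp [this]
            _ = ∑ i ∈ A.attach, if mem (i : ι) v then d (i : ι) else 0 :=
                (Finset.sum_attach A _).symm
            _ = ∑ i : ↥A, c i * (if mem (i : ι) v then 1 else 0) := by
                refine Finset.sum_congr rfl ?_
                intro j _
                have : d (j : ι) = c j := by simp [hd, j.2]
                rw [this, mul_ite, mul_one, mul_zero]
            _ = 0 := h0
        · apply sum_eq_zero
          intro j hj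
          have hm : mem j v := (hFmem j v).1 hj
          by_cases h : j ∈ A
          · exact absurd ((hTmem v).2 ⟨hSv, j, h, hm⟩) hvT
          · simp [hd, h]
      have hdz := hK d hd1 hd2
      have hz := congrFun hdz (i : ι)
      simpa [hd, dif_pos i.2] using hz
    have h1 := hli.fintype_card_le_finrank
    rwa [Module.finrank_fintype_fun_eq_card, Fintype.card_coe, Fintype.card_coe] at h1
  -- double counting : total degree at most 2|A|
  have hub : (∑ v ∈ T, (A.filter (fun i => mem i v)).card) ≤ 2 * A.card := by
    calc ∑ v ∈ T, (A.filter (fun i => mem i v)).card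
        = ∑ v ∈ T, ∑ i ∈ A, (if mem i v then 1 else 0) := by
          refine Finset.sum_congr rfl ?_
          intro v _
          exact Finset.card_filter _ _
      _ = ∑ i ∈ A, ∑ v ∈ T, (if mem i v then 1 else 0) := Finset.sum_comm
      _ ≤ ∑ i ∈ A, ∑ v ∈ univ, (if mem i v then 1 else 0) := by
          refine Finset.sum_le_sum ?_
          intro i _
          exact Finset.sum_le_sum_of_subset (subset_univ T)
      _ = ∑ i ∈ A, (univ.filter (fun v => mem i v)).card := by
          refine Finset.sum_congr rfl ?_
          intro i _
          exact (Finset.card_filter _ _).symm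
      _ = ∑ _i ∈ A, 2 := Finset.sum_congr rfl (fun i _ => hcard2 i)
      _ = 2 * A.card := by rw [Finset.sum_const, smul_eq_mul, mul_comm]
  -- equality : every vertex of T has exactly two incident A-edges
  have hdeg : ∀ v ∈ T, (A.filter (fun i => mem i v)).card = 2 := by
    have hsum_eq : (∑ v ∈ T, (2:ℕ)) = ∑ v ∈ T, (A.filter (fun i => mem i v)).card := by
      refine le_antisymm (Finset.sum_le_sum hlb) ?_
      calc ∑ v ∈ T, (A.filter (fun i => mem i v)).card
          ≤ 2 * A.card := hub
        _ ≤ 2 * T.card := Nat.mul_le_mul_left 2 hcardAT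
        _ = ∑ _v ∈ T, 2 := by rw [Finset.sum_const, smul_eq_mul, mul_comm]
    intro v hv
    exact ((Finset.sum_eq_sum_iff_of_le hlb).1 hsum_eq v hv).symm
  -- the perturbation x - 1/2 on fractional edges
  set d : ι → ℝ := fun i => if (0 < x i ∧ x i < 1) then x i - 1/2 else 0 with hd
  have h1 : ∀ i, d i ≠ 0 → 0 < x i := by
    intro i hi
    by_cases h : 0 < x i ∧ x i < 1
    · exact h.1
    · simp [hd, h] at hi
  have h2 : ∀ v, (∑ i ∈ F v, x i) = 1 → (∑ i ∈ F v, d i) = 0 := by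
    intro v hSv
    by_cases hvT : v ∈ T
    · obtain ⟨-, i0, hi0A, hi0m⟩ := (hTmem v).1 hvT
      have hzero : ∀ j, mem j v → j ∉ A → x j = 0 := by
        intro j hjm hjA
        by_contra hne
        have hxj : 0 < x j := (hx0 j).lt_of_ne (Ne.symm hne)
        have h1le : 1 ≤ x j := le_of_not_gt (fun h => hjA ((hAmem j).2 ⟨hxj, h⟩))
        have hji0 : i0 ≠ j := fun h => hjA (h ▸ hi0A)
        have hi0e : i0 ∈ (F v).erase j :=
          mem_erase.2 ⟨hji0, (hFmem i0 v).2 hi0m⟩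
        have hb1 : x i0 ≤ ∑ k ∈ (F v).erase j, x k :=
          single_le_sum (fun k _ => hx0 k) hi0e
        have hb2 : x j + ∑ k ∈ (F v).erase j, x k = ∑ k ∈ F v, x k :=
          Finset.add_sum_erase (F v) x ((hFmem j v).2 hjm)
        have hxi0 := ((hAmem i0).1 hi0A).1
        rw [hSv] at hb2
        linarith
      have hsplit : ∑ i ∈ F v, d i
          = ∑ i ∈ (F v).filter (fun i => 0 < x i ∧ x i < 1), (x i - 1/2) :=
        (Finset.sum_filter _ _).symm
      have hFeq : (F v).filter (fun i => 0 < x i ∧ x i < 1)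
          = A.filter (fun i => mem i v) := by
        ext j
        simp only [hF, hA, Finset.mem_filter, Finset.mem_univ, true_and]
        tauto
      have hcardv : ((F v).filter (fun i => 0 < x i ∧ x i < 1)).card = 2 := by
        rw [hFeq]; exact hdeg v hvT
      have hxsum : ∑ i ∈ (F v).filter (fun i => 0 < x i ∧ x i < 1), x i = 1 := by
        have hnot : ∑ i ∈ (F v).filter (fun i => ¬(0 < x i ∧ x i < 1)), x i = 0 := by
          apply sum_eq_zero
          intro j hj
          have hjm : mem j v := (hFmem j v).1 (mem_filter.1 hj).1
          have hjA : j ∉ A := fun h => (mem_filter.1 hj).2 ((hAmem j).1 h)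
          exact hzero j hjm hjA
        have hall := Finset.sum_filter_add_sum_filter_not (F v)
          (fun i => 0 < x i ∧ x i < 1) x
        rw [hnot, add_zero] at hall
        rw [hall]; exact hSv
      rw [hsplit, Finset.sum_sub_distrib, hxsum, Finset.sum_const, hcardv]
      norm_num
    · apply sum_eq_zero
      intro j hj
      have hm : mem j v := (hFmem j v).1 hj
      by_cases h : 0 < x j ∧ x j < 1
      · exact absurd ((hTmem v).2 ⟨hSv, j, (hAmem j).2 h, hm⟩) hvT
      · simp [hd, h]
  have hdz := hK d h1 h2
  intro i
  rcases (hx0 i).eq_or_lt with h0 | h0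
  · exact Or.inl h0.symm
  rcases (hle1 i).lt_or_eq with hlt | heq
  · have hp : 0 < x i ∧ x i < 1 := ⟨h0, hlt⟩
    have hz : d i = 0 := by rw [hdz]; rfl
    have hz' : x i - 1/2 = 0 := by
      rwa [show d i = x i - 1/2 from if_pos hp] at hz
    right; left; linarith
  · exact Or.inr (Or.inr heq)
/-- **Half-integrality of extreme points of the fractional edge cover
polytope** (Lemma 6.4, first part).  `G` is a finite simple graph with no
isolated vertices and `P ⊆ ℝ^E` is its fractional edge cover polyhedron.
Every extreme point `x` of `P` satisfies `x e ∈ {0, 1/2, 1}` for each edge. -/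
theorem edge_cover_extreme_point_half_integral
    {V : Type*} [Fintype V] [DecidableEq V]
    (G : SimpleGraph V) [DecidableRel G.Adj]
    (hiso : ∀ v : V, ∃ w : V, G.Adj v w)
    (P : Set ({e // e ∈ G.edgeFinset} → ℝ))
    (hP : P = {x | (∀ e, 0 ≤ x e) ∧
      ∀ v : V, 1 ≤ ∑ e ∈ Finset.univ.filter
        (fun e : {e // e ∈ G.edgeFinset} => v ∈ (e : Sym2 V)), x e})
    (x : {e // e ∈ G.edgeFinset} → ℝ) (hx : x ∈ Set.extremePoints ℝ P) :
    ∀ e, x e = 0 ∨ x e = 1 / 2 ∨ x e = 1 := by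
  classical
  subst hP
  obtain ⟨hx0, hxc⟩ := hx.1
  -- the kernel lemma coming from extremality
  have hK : ∀ d : {e // e ∈ G.edgeFinset} → ℝ, (∀ e, d e ≠ 0 → 0 < x e) →
      (∀ v : V, (∑ e ∈ Finset.univ.filter
          (fun e : {e // e ∈ G.edgeFinset} => v ∈ (e : Sym2 V)), x e) = 1 →
        (∑ e ∈ Finset.univ.filter
          (fun e : {e // e ∈ G.edgeFinset} => v ∈ (e : Sym2 V)), d e) = 0) →
      d = 0 := by
    intro d h1 h2
    set S : V → ℝ := fun v => ∑ e ∈ Finset.univ.filter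
      (fun e : {e // e ∈ G.edgeFinset} => v ∈ (e : Sym2 V)), x e with hS
    set C : V → ℝ := fun v => ∑ e ∈ Finset.univ.filter
      (fun e : {e // e ∈ G.edgeFinset} => v ∈ (e : Sym2 V)), d e with hC
    set B : ℝ := (∑ e, |d e|) + 1 with hB
    have hBpos : 0 < B := by positivity
    set Ms : Finset ℝ := insert (1:ℝ)
      (((Finset.univ.filter (fun e => d e ≠ 0)).image x) ∪
       ((Finset.univ.filter (fun v : V => ¬ S v = 1)).image (fun v => S v - 1)))
      with hMs
    have hne : Ms.Nonempty := Finset.insert_nonempty _ _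
    set m : ℝ := Ms.min' hne with hm
    have hmpos : 0 < m := by
      rw [hm, Finset.lt_min'_iff]
      intro b hb
      rw [hMs, Finset.mem_insert, Finset.mem_union] at hb
      rcases hb with rfl | hb | hb
      · norm_num
      · obtain ⟨e, he, rfl⟩ := Finset.mem_image.1 hb
        exact h1 e (Finset.mem_filter.1 he).2
      · obtain ⟨v, hv, rfl⟩ := Finset.mem_image.1 hb
        have hlt : 1 < S v := lt_of_le_of_ne (hxc v) (Ne.symm (Finset.mem_filter.1 hv).2)
        linarith
    set ε : ℝ := m / B with hε
    have hεpos : 0 < ε := div_pos hmpos hBpos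
    have hεB : ε * B = m := div_mul_cancel₀ m (ne_of_gt hBpos)
    have hdb : ∀ e, |d e| ≤ B := by
      intro e
      have h := Finset.single_le_sum (f := fun e => |d e|)
        (fun k _ => abs_nonneg _) (Finset.mem_univ e)
      rw [hB]; linarith
    have hcb : ∀ v : V, |C v| ≤ B := by
      intro v
      calc |C v| ≤ ∑ e ∈ Finset.univ.filter
            (fun e : {e // e ∈ G.edgeFinset} => v ∈ (e : Sym2 V)), |d e| :=
          Finset.abs_sum_le_sum_abs _ _
        _ ≤ ∑ e, |d e| := Finset.sum_le_sum_of_subset_of_nonneg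
            (Finset.subset_univ _) (fun k _ _ => abs_nonneg _)
        _ ≤ B := by rw [hB]; linarith
    have hmemP : ∀ t : ℝ, |t| ≤ ε → (fun e => x e + t * d e) ∈
        {x : {e // e ∈ G.edgeFinset} → ℝ | (∀ e, 0 ≤ x e) ∧
          ∀ v : V, 1 ≤ ∑ e ∈ Finset.univ.filter
            (fun e : {e // e ∈ G.edgeFinset} => v ∈ (e : Sym2 V)), x e} := by
      intro t ht
      have htB : |t| * B ≤ m := by
        calc |t| * B ≤ ε * B := mul_le_mul_of_nonneg_right ht hBpos.le
          _ = m := hεB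
      refine ⟨?_, ?_⟩
      · intro e
        by_cases hde : d e = 0
        · simpa [hde] using hx0 e
        · have hxm : m ≤ x e := by
            refine Finset.min'_le _ _ ?_
            rw [hMs]
            exact Finset.mem_insert_of_mem (Finset.mem_union_left _
              (Finset.mem_image_of_mem x (Finset.mem_filter.2 ⟨Finset.mem_univ _, hde⟩)))
          have habs : |t * d e| ≤ m := by
            rw [abs_mul]
            calc |t| * |d e| ≤ |t| * B :=
                mul_le_mul_of_nonneg_left (hdb e) (abs_nonneg t)
              _ ≤ m := htB
          have hn := neg_abs_le (t * d e)
          show (0:ℝ) ≤ x e + t * d e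
          linarith
      · intro v
        have hsum : ∑ e ∈ Finset.univ.filter
            (fun e : {e // e ∈ G.edgeFinset} => v ∈ (e : Sym2 V)), (x e + t * d e)
            = S v + t * C v := by
          rw [hS, hC, Finset.mul_sum, ← Finset.sum_add_distrib]
        rw [hsum]
        by_cases hSv : S v = 1
        · have hC0 : C v = 0 := h2 v hSv
          rw [hC0, mul_zero, hSv, add_zero]
        · have hgt : m ≤ S v - 1 := by
            refine Finset.min'_le _ _ ?_
            rw [hMs]
            exact Finset.mem_insert_of_mem (Finset.mem_union_right _
              (Finset.mem_image_of_mem _ (Finset.mem_filter.2 ⟨Finset.mem_univ _, hSv⟩)))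
          have habs : |t * C v| ≤ m := by
            rw [abs_mul]
            calc |t| * |C v| ≤ |t| * B :=
                mul_le_mul_of_nonneg_left (hcb v) (abs_nonneg t)
              _ ≤ m := htB
          have hn := neg_abs_le (t * C v)
          linarith
    have h1m := hmemP ε (le_of_eq (abs_of_pos hεpos))
    have h2m := hmemP (-ε) (le_of_eq (by rw [abs_neg, abs_of_pos hεpos]))
    have hseg : x ∈ openSegment ℝ (fun e => x e + ε * d e) (fun e => x e + (-ε) * d e) := by
      refine ⟨1/2, 1/2, by norm_num, by norm_num, by norm_num, ?_⟩
      funext e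
      simp only [Pi.add_apply, Pi.smul_apply, smul_eq_mul]
      ring
    have heq := hx.2 h1m h2m hseg
    funext e
    have h' : x e + ε * d e = x e := congrFun heq e
    have hεd : ε * d e = 0 := by linarith
    simpa using (mul_eq_zero.1 hεd).resolve_left (ne_of_gt hεpos)
  -- each edge has exactly two endpoints
  have hcard2 : ∀ e : {e // e ∈ G.edgeFinset},
      (Finset.univ.filter (fun v : V => v ∈ (e : Sym2 V))).card = 2 := by
    rintro ⟨e, he⟩
    revert he
    induction e using Sym2.ind with
    | _ a b =>
      intro he
      have hadj : G.Adj a b := by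
        rwa [SimpleGraph.mem_edgeFinset, SimpleGraph.mem_edgeSet] at he
      have hset : (Finset.univ.filter (fun v : V =>
          v ∈ ((⟨s(a,b), he⟩ : {e // e ∈ G.edgeFinset}) : Sym2 V))) = {a, b} := by
        ext w
        simp [Sym2.mem_iff]
      rw [hset, Finset.card_insert_of_notMem (by simp [hadj.ne]),
        Finset.card_singleton]
  exact halfint_aux (fun (e : {e // e ∈ G.edgeFinset}) (v : V) => v ∈ (e : Sym2 V))
    x hx0 hcard2 hK
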